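/- Let R be a ring satisfying the ascending chain condition on two-sided ideals, and let S ⊆ R be a subring such that for every prime ideal P ◁ R the equality (S/P) ∩ U(R/P) = U(S/P) holds, where S/P = {s + P : s ∈ S} is viewed as a subring of R/P. Then S ∩ U(R) = U(S). -/

import Mathlib

/-- Let `R` be a ring satisfying the ascending chain condition on two-sided ideals, and
let `S ⊆ R` be a subring such that for every prime (two-sided) ideal `P ◁ R`
(prime meaning: for two-sided ideals `A, B`, `AB ⊆ P` implies `A ⊆ P` or `B ⊆ P`)
the image subring `S/P = {s + P : s ∈ S}` of `R/P` satisfies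
`(S/P) ∩ U(R/P) = U(S/P)`.  Then `S ∩ U(R) = U(S)`, i.e. every element of `S`
invertible in `R` has its inverse in `S`. -/
theorem stmt_7 {R : Type*} [Ring R]
    (hacc : ∀ f : ℕ →o TwoSidedIdeal R, ∃ N : ℕ, ∀ k : ℕ, N ≤ k → f k = f N)
    (S : Subring R)
    (h : ∀ P : TwoSidedIdeal R,
      (∀ A B : TwoSidedIdeal R, (∀ a ∈ A, ∀ b ∈ B, a * b ∈ P) → A ≤ P ∨ B ≤ P) →
      ∀ u : (P.ringCon.Quotient)ˣ,
        u.val ∈ S.map (RingCon.mk' P.ringCon) →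
        (u⁻¹).val ∈ S.map (RingCon.mk' P.ringCon))
    (x : Rˣ) (hx : (x : R) ∈ S) :
    ((x⁻¹ : Rˣ) : R) ∈ S := by
  have wf : WellFounded ((· > ·) : TwoSidedIdeal R → TwoSidedIdeal R → Prop) := by
    refine (wellFoundedGT_iff_monotone_chain_condition.mpr ?_).wf
    intro f
    obtain ⟨N, hN⟩ := hacc f
    exact ⟨N, fun m hm => (hN m hm).symm⟩
  have key : ∀ P : TwoSidedIdeal R,
      ∀ u : (P.ringCon.Quotient)ˣ,
        u.val ∈ S.map (RingCon.mk' P.ringCon) →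
        (u⁻¹).val ∈ S.map (RingCon.mk' P.ringCon) := by
    intro P
    induction P using WellFounded.induction wf with
    | _ P IH =>
    by_cases hP : ∀ A B : TwoSidedIdeal R, (∀ a ∈ A, ∀ b ∈ B, a * b ∈ P) → A ≤ P ∨ B ≤ P
    · exact h P hP
    push_neg at hP
    obtain ⟨A, B, hAB, hA, hB⟩ := hP
    intro u hu
    obtain ⟨s, hs, hsu⟩ := hu
    obtain ⟨r, hr⟩ := Quotient.exists_rep (u⁻¹).val
    have hr' : RingCon.mk' P.ringCon r = (u⁻¹).val := hr
    have hsr : s * r - 1 ∈ P := by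
      rw [← TwoSidedIdeal.rel_iff, ← RingCon.eq]
      show RingCon.mk' P.ringCon (s * r) = RingCon.mk' P.ringCon 1
      rw [map_mul, hsu, hr', map_one]
      exact u.mul_inv
    have hrs : r * s - 1 ∈ P := by
      rw [← TwoSidedIdeal.rel_iff, ← RingCon.eq]
      show RingCon.mk' P.ringCon (r * s) = RingCon.mk' P.ringCon 1
      rw [map_mul, hsu, hr', map_one]
      exact u.inv_mul
    have hmul : ∀ a ∈ A ⊔ P, ∀ b ∈ B ⊔ P, a * b ∈ P := by
      intro a ha b hb
      rw [TwoSidedIdeal.mem_sup] at ha hb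
      obtain ⟨a₀, ha₀, p, hp, rfl⟩ := ha
      obtain ⟨b₀, hb₀, q, hq, rfl⟩ := hb
      have e : (a₀ + p) * (b₀ + q) = a₀ * b₀ + a₀ * q + p * (b₀ + q) := by noncomm_ring
      rw [e]
      exact P.add_mem (P.add_mem (hAB _ ha₀ _ hb₀) (P.mul_mem_left _ _ hq))
        (P.mul_mem_right _ _ hp)
    have step : ∀ Q : TwoSidedIdeal R, P < Q → ∃ t ∈ S, r - t ∈ Q := by
      intro Q hQ
      have h1 : RingCon.mk' Q.ringCon s * RingCon.mk' Q.ringCon r = 1 := by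
        rw [← map_mul, ← map_one (RingCon.mk' Q.ringCon)]
        exact (RingCon.eq _).mpr ((TwoSidedIdeal.rel_iff _ _ _).mpr (hQ.le hsr))
      have h2 : RingCon.mk' Q.ringCon r * RingCon.mk' Q.ringCon s = 1 := by
        rw [← map_mul, ← map_one (RingCon.mk' Q.ringCon)]
        exact (RingCon.eq _).mpr ((TwoSidedIdeal.rel_iff _ _ _).mpr (hQ.le hrs))
      let v : (Q.ringCon.Quotient)ˣ :=
        ⟨RingCon.mk' Q.ringCon s, RingCon.mk' Q.ringCon r, h1, h2⟩
      obtain ⟨t, ht, htv⟩ := IH Q hQ v ⟨s, hs, rfl⟩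
      refine ⟨t, ht, ?_⟩
      rw [← TwoSidedIdeal.rel_iff]
      exact (RingCon.eq _).mp ((show (v⁻¹).val = RingCon.mk' Q.ringCon r from rfl) ▸ htv).symm
    obtain ⟨t, ht, htA⟩ := step (A ⊔ P) (right_lt_sup.mpr hA)
    obtain ⟨t', ht', htB⟩ := step (B ⊔ P) (right_lt_sup.mpr hB)
    have hF : (r - t) * s * (r - t') ∈ P :=
      hmul _ ((A ⊔ P).mul_mem_right _ _ htA) _ htB
    have hE : r - (t + t' - t * s * t') ∈ P := by
      have e : r - (t + t' - t * s * t') =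
          (r - t) * s * (r - t') - ((r * s - 1) * r - (r * s - 1) * t' - t * (s * r - 1)) := by
        noncomm_ring
      rw [e]
      exact P.sub_mem hF (P.sub_mem (P.sub_mem (P.mul_mem_right _ _ hrs)
        (P.mul_mem_right _ _ hrs)) (P.mul_mem_left _ _ hsr))
    refine ⟨t + t' - t * s * t', S.sub_mem (S.add_mem ht ht')
      (S.mul_mem (S.mul_mem ht hs) ht'), ?_⟩
    rw [← hr']
    exact ((RingCon.eq _).mpr ((TwoSidedIdeal.rel_iff _ _ _).mpr hE)).symm
  -- apply to the zero ideal
  let f := RingCon.mk' (⊥ : TwoSidedIdeal R).ringCon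
  let u : ((⊥ : TwoSidedIdeal R).ringCon.Quotient)ˣ := Units.map f.toMonoidHom x
  have hu : u.val ∈ S.map f := ⟨x, hx, rfl⟩
  obtain ⟨t, ht, htu⟩ := key ⊥ u hu
  rw [show (u⁻¹).val = f ((x⁻¹ : Rˣ) : R) from Units.coe_map_inv f.toMonoidHom x] at htu
  have : t - ((x⁻¹ : Rˣ) : R) ∈ (⊥ : TwoSidedIdeal R) := by
    rw [← TwoSidedIdeal.rel_iff]
    exact (RingCon.eq _).mp htu
  rw [TwoSidedIdeal.mem_bot, sub_eq_zero] at this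
  exact this ▸ ht
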